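/- For all positive reals a and b, 35·S + 24·N3 − 35·G − 24·P6 ≥ 0, where S = √((a²+b²)/2), N3 = (a + √(ab) + b)/3, G = √(ab), and P6 = (a²+b²)/(a+b). -/

import Mathlib

theorem stmt_15 (a b : ℝ) (ha : 0 < a) (hb : 0 < b) :
    let S := Real.sqrt ((a^2+b^2)/2)
    let N3 := (a + Real.sqrt (a*b) + b)/3
    let G := Real.sqrt (a*b)
    let P6 := (a^2+b^2)/(a+b)
    35*S + 24*N3 - 35*G - 24*P6 ≥ 0 := by
  intro S N3 G P6
  have hab : 0 < a + b := by linarith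
  have hg0 : 0 ≤ G := Real.sqrt_nonneg _
  have hs0 : 0 ≤ S := Real.sqrt_nonneg _
  have hg2 : G^2 = a*b := Real.sq_sqrt (by positivity)
  have hs2 : S^2 = (a^2+b^2)/2 := Real.sq_sqrt (by positivity)
  have hsg : G ≤ S := by
    apply Real.sqrt_le_sqrt; nlinarith [sq_nonneg (a-b)]
  have hgm : G ≤ (a+b)/2 := by nlinarith [sq_nonneg (a-b), sq_nonneg G]
  have key : 35*S*(a+b) + 24*N3*(a+b) - 35*G*(a+b) - 24*(a^2+b^2) ≥ 0 := by
    show 35*S*(a+b) + 24*((a + G + b)/3)*(a+b) - 35*G*(a+b) - 24*(a^2+b^2) ≥ 0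
    nlinarith [sq_nonneg (S-G), sq_nonneg (a-b), mul_nonneg (sub_nonneg.2 hsg) (sub_nonneg.2 hgm), mul_nonneg hg0 hs0, sq_nonneg (S - (a+b)/2), sq_nonneg (S + G - (a+b)), mul_nonneg (mul_nonneg hg0 hg0) hs0, mul_pos hab hab]
  have hP : P6*(a+b) = a^2+b^2 := div_mul_cancel₀ _ hab.ne'
  rw [ge_iff_le, ← mul_le_mul_iff_of_pos_right hab]
  nlinarith [key, hP]
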